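/- arXiv:2410.11058 — 2 statements merged into one kernel-verified Lean document; each statement's English description precedes it below -/
import Mathlib

section
/- If γ is a closed piecewise C¹ path in an open set U ⊆ ℂ that is null-homotopic in U (homotopic through closed paths in a compact subset of U to a constant path), then ∮_γ f(z) dz = 0 for every function f holomorphic on U. -/
open Set intervalIntegral Complex MeasureTheory

/-- Integral of f along the segment from a to b equals F b - F a when F is a primitive of f
on a convex open set containing a and b. -/
lemma seg_integral_eq {f F : ℂ → ℂ} {S : Set ℂ} (hconv : Convex ℝ S)
    (hfS : ContinuousOn f S) (hF : ∀ z ∈ S, HasDerivAt F (f z) z)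
    {a b : ℂ} (ha : a ∈ S) (hb : b ∈ S) :
    (∫ t in (0:ℝ)..1, f (a + t • (b - a)) * (b - a)) = F b - F a := by
  have hmem : ∀ t : ℝ, t ∈ Icc (0:ℝ) 1 → a + t • (b - a) ∈ S := fun t ht =>
    hconv.add_smul_sub_mem ha hb ht
  have hpath : ∀ t : ℝ, HasDerivAt (fun s : ℝ => a + s • (b - a)) (b - a) t := by
    intro t
    simpa using ((hasDerivAt_id t).smul_const (b - a)).const_add a
  have hder : ∀ t ∈ uIcc (0:ℝ) 1,
      HasDerivAt (fun s : ℝ => F (a + s • (b - a))) (f (a + t • (b - a)) * (b - a)) t := by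
    intro t ht
    rw [uIcc_of_le zero_le_one] at ht
    have h1 := hF _ (hmem t ht)
    have := HasDerivAt.scomp t h1 (hpath t)
    simpa [smul_eq_mul, mul_comm, Function.comp_def] using this
  have hcont : ContinuousOn (fun t : ℝ => f (a + t • (b - a)) * (b - a)) (uIcc (0:ℝ) 1) := by
    rw [uIcc_of_le zero_le_one]
    refine ContinuousOn.mul (hfS.comp ?_ hmem) continuousOn_const
    fun_prop
  have := intervalIntegral.integral_eq_sub_of_hasDerivAt hder (hcont.intervalIntegrable)
  simpa using this


/-- Existence of a primitive of a holomorphic function on an open rectangle. -/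
lemma exists_primitive_rect {f : ℂ → ℂ} {U : Set ℂ} (hU : IsOpen U)
    (hf : DifferentiableOn ℂ f U) {x₁ x₂ y₁ y₂ : ℝ}
    (hsub : (Ioo x₁ x₂ ×ℂ Ioo y₁ y₂) ⊆ U) :
    ∃ F : ℂ → ℂ, ∀ z ∈ Ioo x₁ x₂ ×ℂ Ioo y₁ y₂, HasDerivAt F (f z) z := by
  set S : Set ℂ := Ioo x₁ x₂ ×ℂ Ioo y₁ y₂ with hSdef
  rcases S.eq_empty_or_nonempty with hS | ⟨c, hc⟩
  · exact ⟨0, fun z hz => absurd hz (by simp [hS])⟩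
  have hfc : ContinuousOn f S := (hf.continuousOn).mono hsub
  have hmemx : ∀ {u v : ℝ}, u ∈ Ioo x₁ x₂ → v ∈ Ioo x₁ x₂ → uIcc u v ⊆ Ioo x₁ x₂ :=
    fun hu hv => Set.ordConnected_Ioo.uIcc_subset hu hv
  have hmemy : ∀ {u v : ℝ}, u ∈ Ioo y₁ y₂ → v ∈ Ioo y₁ y₂ → uIcc u v ⊆ Ioo y₁ y₂ :=
    fun hu hv => Set.ordConnected_Ioo.uIcc_subset hu hv
  -- membership of horizontal/vertical segment points
  have hmem : ∀ {z w : ℂ}, z ∈ S → w ∈ S → ∀ x ∈ uIcc z.re w.re, ∀ y ∈ uIcc z.im w.im,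
      (x + y * I : ℂ) ∈ S := by
    intro z w hz hw x hx y hy
    constructor
    · simpa using hmemx hz.1 hw.1 hx
    · simpa using hmemy hz.2 hw.2 hy
  -- integrability of horizontal and vertical legs
  have hH : ∀ {z w : ℂ}, z ∈ S → w ∈ S → ∀ {y : ℝ}, y ∈ Ioo y₁ y₂ →
      IntervalIntegrable (fun x : ℝ => f (x + y * I)) MeasureTheory.volume z.re w.re := by
    intro z w hz hw y hy
    apply ContinuousOn.intervalIntegrable
    apply hfc.comp (by fun_prop)
    intro x hx
    exact ⟨by simpa using hmemx hz.1 hw.1 hx, by simpa using hy⟩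
  have hV : ∀ {z w : ℂ}, z ∈ S → w ∈ S → ∀ {x : ℝ}, x ∈ Ioo x₁ x₂ →
      IntervalIntegrable (fun y : ℝ => f (x + y * I)) MeasureTheory.volume z.im w.im := by
    intro z w hz hw x hx
    apply ContinuousOn.intervalIntegrable
    apply hfc.comp (by fun_prop)
    intro y hy
    exact ⟨by simpa using hx, by simpa using hmemy hz.2 hw.2 hy⟩
  -- the candidate primitive
  set F : ℂ → ℂ := fun z =>
    (∫ x in c.re..z.re, f (x + c.im * I)) + I * ∫ y in c.im..z.im, f (z.re + y * I) with hFdef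
  -- key identity
  have key : ∀ z ∈ S, ∀ w ∈ S, F w - F z =
      (∫ x in z.re..w.re, f (x + z.im * I)) + I * ∫ y in z.im..w.im, f (w.re + y * I) := by
    intro z hz w hw
    have rect := Complex.integral_boundary_rect_eq_zero_of_differentiableOn f
      (z.re + c.im * I) (w.re + z.im * I)
      (hf.mono (fun u hu => hsub ?rectsub))
    case rectsub =>
      simp only [mem_reProdIm] at hu ⊢
      constructor
      · apply hmemx hz.1 hw.1
        simpa using hu.1
      · apply hmemy hc.2 hz.2
        simpa using hu.2
    simp only [Complex.add_re, Complex.ofReal_re, Complex.mul_re, Complex.I_re, Complex.I_im,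
      Complex.ofReal_im, Complex.add_im, Complex.mul_im, mul_zero, mul_one, zero_mul, sub_zero,
      zero_add, add_zero, zero_sub, neg_zero, smul_eq_mul] at rect
    have addH : (∫ x in c.re..z.re, f (x + c.im * I)) + (∫ x in z.re..w.re, f (x + c.im * I))
        = ∫ x in c.re..w.re, f (x + c.im * I) :=
      intervalIntegral.integral_add_adjacent_intervals (hH hc hz hc.2) (hH hz hw hc.2)
    have addV : (∫ y in c.im..z.im, f (w.re + y * I)) + (∫ y in z.im..w.im, f (w.re + y * I))
        = ∫ y in c.im..w.im, f (w.re + y * I) :=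
      intervalIntegral.integral_add_adjacent_intervals (hV hc hz hw.1) (hV hz hw hw.1)
    simp only [hFdef]
    linear_combination rect - addH - I * addV
  refine ⟨F, fun z hz => ?_⟩
  rw [hasDerivAt_iff_isLittleO]
  rw [Asymptotics.isLittleO_iff]
  intro ε hε
  -- continuity of f at z
  have hcf : ContinuousAt f z := (hf.differentiableAt (hU.mem_nhds (hsub hz))).continuousAt
  rcases Metric.continuousAt_iff.1 hcf (ε/2) (by positivity) with ⟨δ, hδ, hball⟩
  have hSopen : IsOpen S := IsOpen.reProdIm isOpen_Ioo isOpen_Ioo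
  filter_upwards [hSopen.mem_nhds hz, Metric.ball_mem_nhds z (show (0:ℝ) < δ/2 by positivity)]
    with w hwS hwz
  rw [key z hz w hwS]
  have habs_re : |w.re - z.re| ≤ ‖w - z‖ := by
    simpa using Complex.abs_re_le_norm (w - z)
  have habs_im : |w.im - z.im| ≤ ‖w - z‖ := by
    simpa using Complex.abs_im_le_norm (w - z)
  have hdzw : ‖w - z‖ < δ/2 := by
    rwa [Metric.mem_ball, dist_eq] at hwz
  have hwz_eq : (w - z : ℂ) = ↑(w.re - z.re) + ↑(w.im - z.im) * I := by
    simp [Complex.ext_iff]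
  have hconst : (w - z) • f z =
      (∫ _x in z.re..w.re, f z) + I * ∫ _y in z.im..w.im, f z := by
    simp only [intervalIntegral.integral_const, Complex.real_smul, smul_eq_mul]
    rw [hwz_eq]
    push_cast
    ring
  rw [hconst]
  have hsubH : (∫ x in z.re..w.re, f (x + z.im * I)) - ∫ _x in z.re..w.re, f z
      = ∫ x in z.re..w.re, (f (x + z.im * I) - f z) :=
    (intervalIntegral.integral_sub (hH hz hwS hz.2) intervalIntegrable_const).symm
  have hsubV : (∫ y in z.im..w.im, f (w.re + y * I)) - ∫ _y in z.im..w.im, f z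
      = ∫ y in z.im..w.im, (f (w.re + y * I) - f z) :=
    (intervalIntegral.integral_sub (hV hz hwS hwS.1) intervalIntegrable_const).symm
  have hexp : (∫ x in z.re..w.re, f (x + z.im * I)) + I * (∫ y in z.im..w.im, f (w.re + y * I))
      - ((∫ _x in z.re..w.re, f z) + I * ∫ _y in z.im..w.im, f z)
      = (∫ x in z.re..w.re, (f (x + z.im * I) - f z))
        + I * ∫ y in z.im..w.im, (f (w.re + y * I) - f z) := by
    linear_combination hsubH + I * hsubV
  rw [hexp]
  have hboundH : ‖∫ x in z.re..w.re, (f (x + z.im * I) - f z)‖ ≤ (ε/2) * |w.re - z.re| := by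
    apply intervalIntegral.norm_integral_le_of_norm_le_const
    intro x hx
    have hx' : |x - z.re| ≤ |w.re - z.re| := by
      rcases le_total z.re w.re with h | h
      · rw [uIoc_of_le h] at hx
        rw [_root_.abs_of_nonneg (show (0:ℝ) ≤ x - z.re by linarith [hx.1.le]),
          _root_.abs_of_nonneg (show (0:ℝ) ≤ w.re - z.re by linarith)]
        linarith [hx.2]
      · rw [uIoc_of_ge h] at hx
        rw [_root_.abs_of_nonpos (show x - z.re ≤ 0 by linarith [hx.2]),
          _root_.abs_of_nonpos (show w.re - z.re ≤ 0 by linarith)]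
        linarith [hx.1]
    have heq : (↑x + ↑z.im * I - z : ℂ) = ((x - z.re : ℝ) : ℂ) := by
      simp [Complex.ext_iff]
    have hdist : dist (↑x + ↑z.im * I) z < δ := by
      rw [dist_eq, heq, Complex.norm_real, Real.norm_eq_abs]
      calc |x - z.re| ≤ |w.re - z.re| := hx'
        _ ≤ ‖w - z‖ := habs_re
        _ < δ/2 := hdzw
        _ < δ := by linarith
    rw [← dist_eq_norm]
    exact (hball hdist).le
  have hboundV : ‖∫ y in z.im..w.im, (f (w.re + y * I) - f z)‖ ≤ (ε/2) * |w.im - z.im| := by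
    apply intervalIntegral.norm_integral_le_of_norm_le_const
    intro y hy
    have hy' : |y - z.im| ≤ |w.im - z.im| := by
      rcases le_total z.im w.im with h | h
      · rw [uIoc_of_le h] at hy
        rw [_root_.abs_of_nonneg (show (0:ℝ) ≤ y - z.im by linarith [hy.1.le]),
          _root_.abs_of_nonneg (show (0:ℝ) ≤ w.im - z.im by linarith)]
        linarith [hy.2]
      · rw [uIoc_of_ge h] at hy
        rw [_root_.abs_of_nonpos (show y - z.im ≤ 0 by linarith [hy.2]),
          _root_.abs_of_nonpos (show w.im - z.im ≤ 0 by linarith)]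
        linarith [hy.1]
    have heq : (↑w.re + ↑y * I - z : ℂ) = ↑(w.re - z.re) + ↑(y - z.im) * I := by
      simp [Complex.ext_iff]
    have hdist : dist (↑w.re + ↑y * I) z < δ := by
      rw [dist_eq]
      calc ‖↑w.re + ↑y * I - z‖
          ≤ |w.re - z.re| + |y - z.im| := by
            rw [heq]
            refine (Complex.norm_le_abs_re_add_abs_im _).trans ?_
            simp
        _ ≤ ‖w - z‖ + ‖w - z‖ :=
            add_le_add habs_re (hy'.trans habs_im)
        _ < δ := by linarith
    rw [← dist_eq_norm]
    exact (hball hdist).le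
  calc ‖(∫ x in z.re..w.re, (f (x + z.im * I) - f z))
        + I * ∫ y in z.im..w.im, (f (w.re + y * I) - f z)‖
      ≤ ‖∫ x in z.re..w.re, (f (x + z.im * I) - f z)‖
        + ‖I * ∫ y in z.im..w.im, (f (w.re + y * I) - f z)‖ := norm_add_le _ _
    _ ≤ (ε/2) * |w.re - z.re| + (ε/2) * |w.im - z.im| := by
        rw [norm_mul]
        simp only [Complex.norm_I, one_mul]
        exact add_le_add hboundH hboundV
    _ ≤ (ε/2) * ‖w - z‖ + (ε/2) * ‖w - z‖ := by
        gcongr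
    _ = ε * ‖w - z‖ := by ring

/-- FTC along a path which is C¹ on a surrounding interval. -/
lemma ftc_piece {f F : ℂ → ℂ} {γ : ℝ → ℂ} {a b A B : ℝ} (hAB : A < B)
    (hab : a ≤ b) (hA : A ≤ a) (hB : b ≤ B) (hγ : ContDiffOn ℝ 1 γ (Icc A B))
    {S : Set ℂ} (hS : IsOpen S) (hγS : ∀ t ∈ Icc a b, γ t ∈ S)
    (hfS : ContinuousOn f S) (hF : ∀ z ∈ S, HasDerivAt F (f z) z) :
    IntervalIntegrable (fun t => f (γ t) * deriv γ t) volume a b ∧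
      (∫ t in a..b, f (γ t) * deriv γ t) = F (γ b) - F (γ a) := by
  have hγc : ContinuousOn γ (Icc a b) := hγ.continuousOn.mono (Icc_subset_Icc hA hB)
  -- the "good" integrand
  set g : ℝ → ℂ := fun t => f (γ t) * derivWithin γ (Icc A B) t with hgdef
  have hgc : ContinuousOn g (Icc a b) := by
    apply ContinuousOn.mul (hfS.comp hγc hγS)
    exact (hγ.continuousOn_derivWithin (uniqueDiffOn_Icc hAB) le_rfl).mono (Icc_subset_Icc hA hB)
  have hgint : IntervalIntegrable g volume a b := by
    apply ContinuousOn.intervalIntegrable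
    rwa [uIcc_of_le hab]
  -- on the open interval, deriv = derivWithin and γ is differentiable
  have hIoo : ∀ t ∈ Ioo a b, HasDerivAt γ (deriv γ t) t ∧ deriv γ t = derivWithin γ (Icc A B) t := by
    intro t ht
    have htAB : Icc A B ∈ nhds t := Icc_mem_nhds (lt_of_le_of_lt hA ht.1) (lt_of_lt_of_le ht.2 hB)
    have hdiff : DifferentiableAt ℝ γ t :=
      ((hγ.differentiableOn one_ne_zero) t (mem_of_mem_nhds htAB)).differentiableAt htAB
    exact ⟨hdiff.hasDerivAt, (derivWithin_of_mem_nhds htAB).symm⟩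
  -- a.e. equality of the integrands on the relevant interval
  have hae : (fun t => f (γ t) * deriv γ t) =ᵐ[volume.restrict (Set.uIoc a b)] g := by
    rw [Set.uIoc_of_le hab, ← MeasureTheory.Measure.restrict_congr_set Ioo_ae_eq_Ioc]
    filter_upwards [MeasureTheory.ae_restrict_mem measurableSet_Ioo] with t ht
    rw [hgdef]
    simp only
    rw [(hIoo t ht).2]
  have hae' : g =ᵐ[volume.restrict (Ioc a b)] (fun t => f (γ t) * deriv γ t) := by
    rw [Set.uIoc_of_le hab] at hae
    exact hae.symm
  have hint : IntervalIntegrable (fun t => f (γ t) * deriv γ t) volume a b := by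
    constructor
    · exact (hgint.1).congr hae'
    · have : Ioc b a = ∅ := Ioc_eq_empty (by simpa using hab)
      rw [IntegrableOn, this]
      exact integrableOn_empty
  refine ⟨hint, ?_⟩
  have heq : (∫ t in a..b, f (γ t) * deriv γ t) = ∫ t in a..b, g t :=
    intervalIntegral.integral_congr_ae ((ae_restrict_iff' measurableSet_uIoc).1 hae)
  rw [heq]
  -- FTC
  apply intervalIntegral.integral_eq_sub_of_hasDeriv_right_of_le hab
  · -- continuity of F ∘ γ
    have hFc : ContinuousOn F S := fun z hz => ((hF z hz).differentiableAt.continuousAt).continuousWithinAt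
    exact hFc.comp hγc hγS
  · intro t ht
    have h1 := (hIoo t ht).1
    have h2 := hF (γ t) (hγS t (Ioo_subset_Icc_self ht))
    have hcomp : HasDerivAt (F ∘ γ) (deriv γ t • f (γ t)) t := h2.scomp t h1
    rw [hgdef]
    simp only
    rw [← (hIoo t ht).2]
    have : deriv γ t • f (γ t) = f (γ t) * deriv γ t := by
      rw [smul_eq_mul]; ring
    rw [this] at hcomp
    exact hcomp.hasDerivWithinAt
  · exact hgint


lemma convex_reProdIm' {s t : Set ℝ} (hs : Convex ℝ s) (ht : Convex ℝ t) :
    Convex ℝ (s ×ℂ t) := by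
  intro z hz w hw a b ha hb hab
  refine ⟨?_, ?_⟩
  · simpa using hs hz.1 hw.1 ha hb hab
  · simpa using ht hz.2 hw.2 ha hb hab

noncomputable def segInt (f : ℂ → ℂ) (a b : ℂ) : ℂ :=
  ∫ t in (0:ℝ)..1, f (a + t • (b - a)) * (b - a)

lemma segInt_eq {f F : ℂ → ℂ} {S : Set ℂ} (hconv : Convex ℝ S)
    (hfS : ContinuousOn f S) (hF : ∀ z ∈ S, HasDerivAt F (f z) z)
    {a b : ℂ} (ha : a ∈ S) (hb : b ∈ S) : segInt f a b = F b - F a :=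
  seg_integral_eq hconv hfS hF ha hb

lemma segInt_self (f : ℂ → ℂ) (a : ℂ) : segInt f a a = 0 := by
  simp [segInt]

def PiecewiseC1On (γ : ℝ → ℂ) (a b : ℝ) : Prop :=
  ContinuousOn γ (Set.Icc a b) ∧ ∃ n : ℕ, ∃ p : ℕ → ℝ, 0 < n ∧ p 0 = a ∧ p n = b ∧
    (∀ i < n, p i < p (i + 1)) ∧ ∀ i < n, ContDiffOn ℝ 1 γ (Set.Icc (p i) (p (i + 1)))

theorem cauchy_nullhomotopic (U : Set ℂ) (hU : IsOpen U)
    (γ : ℝ → ℂ) (hγ : PiecewiseC1On γ 0 1) (hc : γ 0 = γ 1)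
    (hγU : ∀ t ∈ Icc (0:ℝ) 1, γ t ∈ U)
    (K : Set ℂ) (hK : IsCompact K) (hKU : K ⊆ U)
    (σ : ℝ × ℝ → ℂ) (hσ : ContinuousOn σ (Icc 0 1 ×ˢ Icc 0 1))
    (hσK : ∀ p ∈ Icc (0:ℝ) 1 ×ˢ Icc (0:ℝ) 1, σ p ∈ K)
    (hσ0 : ∀ x ∈ Icc (0:ℝ) 1, σ (0, x) = γ x)
    (hσ1 : ∃ c : ℂ, ∀ x ∈ Icc (0:ℝ) 1, σ (1, x) = c)
    (hσc : ∀ t ∈ Icc (0:ℝ) 1, σ (t, 0) = σ (t, 1))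
    (f : ℂ → ℂ) (hf : DifferentiableOn ℂ f U) :
    ∫ t in (0:ℝ)..1, f (γ t) * deriv γ t = 0 := by
  obtain ⟨hγcont, n, pp, hn, hp0, hpn, hmono, hsmooth⟩ := hγ
  obtain ⟨cc, hcc⟩ := hσ1
  -- monotonicity of the partition
  have hple : ∀ i j : ℕ, i ≤ j → j ≤ n → pp i ≤ pp j := by
    intro i j hij hjn
    induction j with
    | zero =>
      have : i = 0 := Nat.le_zero.mp hij
      subst this; exact le_rfl
    | succ k ih =>
      rcases Nat.eq_or_lt_of_le hij with rfl | h
      · exact le_rfl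
      · exact le_trans (ih (Nat.lt_succ_iff.mp h) (by omega)) (hmono k (by omega)).le
  have hgap : ∀ k, k < n → pp (k+1) - pp k ≤ 1 := by
    intro k hk
    have h1 : pp 0 ≤ pp k := hple 0 k (Nat.zero_le _) (by omega)
    have h2 : pp (k+1) ≤ pp n := hple (k+1) n (by omega) le_rfl
    rw [hp0] at h1; rw [hpn] at h2; linarith
  -- thickening of K inside U
  obtain ⟨δ, hδpos, hδK⟩ := hK.exists_thickening_subset_open hU hKU
  have hε : (0:ℝ) < δ/2 := by positivity
  -- squares around points of K are inside U
  have hsq : ∀ c ∈ K, (Ioo (c.re - δ/2) (c.re + δ/2) ×ℂ Ioo (c.im - δ/2) (c.im + δ/2)) ⊆ U := by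
    intro c hcK z hz
    apply hδK
    rw [Metric.mem_thickening_iff]
    refine ⟨c, hcK, ?_⟩
    rw [Complex.dist_eq]
    have h1 : |(z-c).re| < δ/2 := by
      rw [Complex.sub_re, abs_lt]; exact ⟨by linarith [hz.1.1], by linarith [hz.1.2]⟩
    have h2 : |(z-c).im| < δ/2 := by
      rw [Complex.sub_im, abs_lt]; exact ⟨by linarith [hz.2.1], by linarith [hz.2.2]⟩
    calc ‖z - c‖ ≤ |(z-c).re| + |(z-c).im| := Complex.norm_le_abs_re_add_abs_im _
      _ < δ := by linarith
  -- uniform continuity of σ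
  have hQcomp : IsCompact (Icc (0:ℝ) 1 ×ˢ Icc (0:ℝ) 1) := isCompact_Icc.prod isCompact_Icc
  obtain ⟨δ₀, hδ₀, huc⟩ :=
    Metric.uniformContinuousOn_iff.1 (hQcomp.uniformContinuousOn_of_continuous hσ) (δ/2) hε
  -- choose the grid size
  obtain ⟨L, hL⟩ := exists_nat_gt (1/δ₀)
  have hL0 : 0 < L := by
    rcases Nat.eq_zero_or_pos L with rfl | h
    · rw [Nat.cast_zero] at hL
      linarith [one_div_pos.2 hδ₀]
    · exact h
  have hLR : (0:ℝ) < L := by exact_mod_cast hL0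
  have hLmesh : 1/(L:ℝ) < δ₀ := by
    rw [div_lt_iff₀ hLR]
    have := (div_lt_iff₀ hδ₀).1 hL
    linarith
  -- the space partition
  set N := n * L with hN
  set T : ℕ → ℝ := fun j => pp (j / L) + ((j % L : ℕ) : ℝ) * (pp (j / L + 1) - pp (j / L)) / L with hTdef
  have hTT : ∀ k r : ℕ, k < n → r ≤ L → T (r + L * k) = pp k + r * (pp (k+1) - pp k) / L := by
    intro k r hk hr
    rcases Nat.lt_or_ge r L with h | h
    · have hdiv : (r + L * k)/L = k := by
        rw [Nat.add_mul_div_left _ _ hL0, Nat.div_eq_of_lt h, Nat.zero_add]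
      have hmod : (r + L * k) % L = r := by
        rw [Nat.add_mul_mod_self_left, Nat.mod_eq_of_lt h]
      simp only [hTdef, hdiv, hmod]
    · have hr' : r = L := le_antisymm hr h
      have hdiv : (r + L * k)/L = k + 1 := by
        rw [hr', Nat.add_mul_div_left _ _ hL0, Nat.div_self hL0]; omega
      have hmod : (r + L * k) % L = 0 := by
        rw [hr', Nat.add_mul_mod_self_left, Nat.mod_self]
      simp only [hTdef, hdiv, hmod, Nat.cast_zero, zero_mul, zero_div, add_zero]
      rw [hr']
      field_simp
      ring
  have hcell : ∀ j, j < N → (j/L < n) ∧ pp (j/L) ≤ T j ∧ T j < T (j+1) ∧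
      T (j+1) ≤ pp (j/L + 1) ∧ T (j+1) - T j ≤ 1/L := by
    intro j hj
    have hk : j / L < n := by
      rw [Nat.div_lt_iff_lt_mul hL0]
      omega
    have hr : j % L < L := Nat.mod_lt _ hL0
    have hj1 : j = j % L + L * (j / L) := (Nat.mod_add_div j L).symm
    have e1 : T j = pp (j/L) + ((j%L : ℕ) : ℝ) * (pp (j/L+1) - pp (j/L)) / L := rfl
    have e2 : T (j+1) = pp (j/L) + (((j%L : ℕ) : ℝ) + 1) * (pp (j/L+1) - pp (j/L)) / L := by
      have h2 : j + 1 = (j % L + 1) + L * (j / L) := by omega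
      rw [h2, hTT _ _ hk (by omega)]
      push_cast
      ring
    have hgappos : (0:ℝ) < pp (j/L+1) - pp (j/L) := sub_pos.2 (hmono _ hk)
    have hrR : ((j % L : ℕ) : ℝ) < L := by exact_mod_cast hr
    have hr0 : (0:ℝ) ≤ ((j % L : ℕ) : ℝ) := Nat.cast_nonneg _
    refine ⟨hk, ?_, ?_, ?_, ?_⟩
    · have hterm : 0 ≤ ((j%L:ℕ):ℝ) * (pp (j/L+1) - pp (j/L)) / L :=
        div_nonneg (mul_nonneg hr0 hgappos.le) hLR.le
      rw [e1]; linarith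
    · rw [e1, e2]
      have hdiff : pp (j/L) + (((j%L:ℕ):ℝ) + 1) * (pp (j/L+1) - pp (j/L)) / L
          - (pp (j/L) + ((j%L:ℕ):ℝ) * (pp (j/L+1) - pp (j/L)) / L)
          = (pp (j/L+1) - pp (j/L)) / L := by ring
      linarith [div_pos hgappos hLR]
    · rw [e2]
      have h1 : (((j%L:ℕ):ℝ) + 1) ≤ L := by
        have : (j % L) + 1 ≤ L := hr
        exact_mod_cast this
      calc pp (j/L) + (((j%L:ℕ):ℝ) + 1) * (pp (j/L+1) - pp (j/L)) / L
          ≤ pp (j/L) + (L:ℝ) * (pp (j/L+1) - pp (j/L)) / L := by gcongr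
        _ = pp (j/L+1) := by field_simp; ring
    · rw [e1, e2]
      have := hgap _ hk
      have : (pp (j/L+1) - pp (j/L)) / L ≤ 1 / L := by gcongr
      calc pp (j/L) + (((j%L:ℕ):ℝ) + 1) * (pp (j/L+1) - pp (j/L)) / L
          - (pp (j/L) + ((j%L:ℕ):ℝ) * (pp (j/L+1) - pp (j/L)) / L)
          = (pp (j/L+1) - pp (j/L)) / L := by ring
        _ ≤ 1 / L := this
  -- endpoints of the partition
  have hT0 : T 0 = 0 := by
    simp only [hTdef, Nat.zero_div, Nat.zero_mod, Nat.cast_zero, zero_mul, zero_div,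
      add_zero, hp0]
  have hTN : T N = 1 := by
    have hdiv : (n*L)/L = n := Nat.mul_div_cancel n hL0
    have hmod : (n*L) % L = 0 := Nat.mul_mod_left n L
    simp only [hTdef, hN, hdiv, hmod, Nat.cast_zero, zero_mul, zero_div, add_zero, hpn]
  have hT01 : ∀ j, j ≤ N → T j ∈ Icc (0:ℝ) 1 := by
    intro j hj
    rcases eq_or_lt_of_le hj with rfl | hj'
    · rw [hTN]; exact ⟨zero_le_one, le_rfl⟩
    · obtain ⟨hk, h1, h2, h3, _⟩ := hcell j hj'
      have l1 : (0:ℝ) ≤ pp (j/L) := by rw [← hp0]; exact hple 0 _ (Nat.zero_le _) (by omega)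
      have l2 : pp (j/L + 1) ≤ 1 := by rw [← hpn]; exact hple _ n (by omega) le_rfl
      exact ⟨le_trans l1 h1, le_trans h2.le (le_trans h3 l2)⟩
  -- the time partition
  set X : ℕ → ℝ := fun i => (i:ℝ)/L with hXdef
  have hX0 : X 0 = 0 := by simp [hXdef]
  have hXL : X L = 1 := by
    simp only [hXdef]
    field_simp
  have hXstep : ∀ i : ℕ, X (i+1) - X i = 1/L := by
    intro i
    simp only [hXdef]
    push_cast
    ring
  have hX01 : ∀ i, i ≤ L → X i ∈ Icc (0:ℝ) 1 := by
    intro i hi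
    constructor
    · positivity
    · rw [hXdef]
      rw [div_le_one hLR]
      exact_mod_cast hi
  -- grid vertices and squares
  set v : ℕ → ℕ → ℂ := fun i j => σ (X i, T j) with hvdef
  set SQ : ℕ → ℕ → Set ℂ := fun i j =>
    Ioo ((v i j).re - δ/2) ((v i j).re + δ/2) ×ℂ Ioo ((v i j).im - δ/2) ((v i j).im + δ/2)
    with hSQdef
  have hQmem : ∀ i, i ≤ L → ∀ j, j ≤ N → (X i, T j) ∈ Icc (0:ℝ) 1 ×ˢ Icc (0:ℝ) 1 :=
    fun i hi j hj => ⟨hX01 i hi, hT01 j hj⟩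
  have hSQU : ∀ i, i ≤ L → ∀ j, j ≤ N → SQ i j ⊆ U :=
    fun i hi j hj => hsq _ (hσK _ (hQmem i hi j hj))
  have hopenSQ : ∀ i j, IsOpen (SQ i j) := fun i j => isOpen_Ioo.reProdIm isOpen_Ioo
  have hconvSQ : ∀ i j, Convex ℝ (SQ i j) :=
    fun i j => convex_reProdIm' (convex_Ioo _ _) (convex_Ioo _ _)
  have hfSQ : ∀ i, i ≤ L → ∀ j, j ≤ N → ContinuousOn f (SQ i j) :=
    fun i hi j hj => hf.continuousOn.mono (hSQU i hi j hj)
  -- the image of each cell is inside the corresponding square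
  have hcellmem : ∀ i, i < L → ∀ j, j < N → ∀ q : ℝ × ℝ,
      q.1 ∈ Icc (X i) (X (i+1)) → q.2 ∈ Icc (T j) (T (j+1)) → σ q ∈ SQ i j := by
    intro i hi j hj q hq1 hq2
    obtain ⟨hk, h1, h2, h3, h4⟩ := hcell j hj
    have hXi := hXstep i
    have hq1' : q.1 ∈ Icc (0:ℝ) 1 :=
      ⟨le_trans (hX01 i hi.le).1 hq1.1, le_trans hq1.2 (hX01 (i+1) hi).2⟩
    have hq2' : q.2 ∈ Icc (0:ℝ) 1 :=
      ⟨le_trans (hT01 j hj.le).1 hq2.1, le_trans hq2.2 (hT01 (j+1) hj).2⟩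
    have hqQ : q ∈ Icc (0:ℝ) 1 ×ˢ Icc (0:ℝ) 1 := ⟨hq1', hq2'⟩
    have hdist : dist q (X i, T j) < δ₀ := by
      rw [Prod.dist_eq]
      have d1 : dist q.1 (X i) < δ₀ := by
        rw [Real.dist_eq, abs_lt]
        refine ⟨lt_of_lt_of_le (neg_lt_zero.2 hδ₀) (sub_nonneg.2 hq1.1), ?_⟩
        calc q.1 - X i ≤ X (i+1) - X i := sub_le_sub_right hq1.2 _
          _ = 1/(L:ℝ) := hXi
          _ < δ₀ := hLmesh
      have d2 : dist q.2 (T j) < δ₀ := by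
        rw [Real.dist_eq, abs_lt]
        refine ⟨lt_of_lt_of_le (neg_lt_zero.2 hδ₀) (sub_nonneg.2 hq2.1), ?_⟩
        calc q.2 - T j ≤ T (j+1) - T j := sub_le_sub_right hq2.2 _
          _ ≤ 1/(L:ℝ) := h4
          _ < δ₀ := hLmesh
      exact max_lt d1 d2
    have := huc q hqQ (X i, T j) (hQmem i hi.le j hj.le) hdist
    rw [Complex.dist_eq] at this
    have hre : |(σ q - v i j).re| < δ/2 := lt_of_le_of_lt (Complex.abs_re_le_norm _) this
    have him : |(σ q - v i j).im| < δ/2 := lt_of_le_of_lt (Complex.abs_im_le_norm _) this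
    rw [Complex.sub_re, abs_lt] at hre
    rw [Complex.sub_im, abs_lt] at him
    refine ⟨⟨?_, ?_⟩, ?_, ?_⟩
    · linarith [hre.1]
    · linarith [hre.2]
    · linarith [him.1]
    · linarith [him.2]
  -- primitives on each square
  have hprim : ∀ i, i < L → ∀ j, j < N → ∃ F : ℂ → ℂ, ∀ z ∈ SQ i j, HasDerivAt F (f z) z :=
    fun i hi j hj => exists_primitive_rect hU hf (hSQU i hi.le j hj.le)
  -- corners of cells belong to the squares
  have hXle : ∀ i : ℕ, X i ≤ X (i+1) := by
    intro i
    have := hXstep i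
    have : (0:ℝ) < 1/L := by positivity
    linarith [hXstep i]
  have hm00 : ∀ i, i < L → ∀ j, j < N → v i j ∈ SQ i j := by
    intro i hi j hj
    exact hcellmem i hi j hj (X i, T j) ⟨le_rfl, hXle i⟩ ⟨le_rfl, (hcell j hj).2.2.1.le⟩
  have hm01 : ∀ i, i < L → ∀ j, j < N → v i (j+1) ∈ SQ i j := by
    intro i hi j hj
    exact hcellmem i hi j hj (X i, T (j+1)) ⟨le_rfl, hXle i⟩ ⟨(hcell j hj).2.2.1.le, le_rfl⟩
  have hm10 : ∀ i, i < L → ∀ j, j < N → v (i+1) j ∈ SQ i j := by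
    intro i hi j hj
    exact hcellmem i hi j hj (X (i+1), T j) ⟨hXle i, le_rfl⟩ ⟨le_rfl, (hcell j hj).2.2.1.le⟩
  have hm11 : ∀ i, i < L → ∀ j, j < N → v (i+1) (j+1) ∈ SQ i j := by
    intro i hi j hj
    exact hcellmem i hi j hj (X (i+1), T (j+1)) ⟨hXle i, le_rfl⟩ ⟨(hcell j hj).2.2.1.le, le_rfl⟩
  -- the discrete integral along each row
  set A : ℕ → ℂ := fun i => ∑ j ∈ Finset.range N, segInt f (v i j) (v i (j+1)) with hAdef
  -- first row equals the contour integral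
  have hv0 : ∀ j, j ≤ N → v 0 j = γ (T j) := by
    intro j hj
    show σ (X 0, T j) = γ (T j)
    rw [hX0]
    exact hσ0 (T j) (hT01 j hj)
  have hpieces : ∀ j, j < N →
      IntervalIntegrable (fun t => f (γ t) * deriv γ t) volume (T j) (T (j+1)) ∧
      (∫ t in T j..T (j+1), f (γ t) * deriv γ t) = segInt f (v 0 j) (v 0 (j+1)) := by
    intro j hj
    obtain ⟨hk, h1, h2, h3, _⟩ := hcell j hj
    obtain ⟨F, hF⟩ := hprim 0 hL0 j hj
    have hγS : ∀ t ∈ Icc (T j) (T (j+1)), γ t ∈ SQ 0 j := by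
      intro t ht
      have ht01 : t ∈ Icc (0:ℝ) 1 :=
        ⟨le_trans (hT01 j hj.le).1 ht.1, le_trans ht.2 (hT01 (j+1) hj).2⟩
      rw [← hσ0 t ht01]
      refine hcellmem 0 hL0 j hj (0, t) ?_ ht
      rw [hX0]
      exact ⟨le_rfl, by rw [← hX0]; exact hXle 0⟩
    obtain ⟨hint, heq⟩ := ftc_piece (hmono _ hk) h2.le h1 h3 (hsmooth _ hk)
      (hopenSQ 0 j) hγS (hfSQ 0 hL0.le j hj.le) hF
    refine ⟨hint, ?_⟩
    rw [heq, segInt_eq (hconvSQ 0 j) (hfSQ 0 hL0.le j hj.le) hF (hm00 0 hL0 j hj)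
      (hm01 0 hL0 j hj), hv0 j hj.le, hv0 (j+1) hj]
  have hA0 : (∫ t in (0:ℝ)..1, f (γ t) * deriv γ t) = A 0 := by
    have hsum := intervalIntegral.sum_integral_adjacent_intervals
      (a := T) (n := N) (μ := volume) (fun j hj => (hpieces j hj).1)
    rw [hT0, hTN] at hsum
    rw [← hsum, hAdef]
    exact Finset.sum_congr rfl fun j hj => (hpieces j (Finset.mem_range.1 hj)).2
  -- homotopy step between consecutive rows
  have hstep : ∀ i, i < L → A (i+1) = A i := by
    intro i hi
    set H : ℕ → ℂ := fun j => segInt f (v i j) (v (i+1) j) with hHdef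
    have key : ∀ j, j < N →
        segInt f (v (i+1) j) (v (i+1) (j+1)) - segInt f (v i j) (v i (j+1))
          = H (j+1) - H j := by
      intro j hj
      obtain ⟨F, hF⟩ := hprim i hi j hj
      have e1 := segInt_eq (hconvSQ i j) (hfSQ i hi.le j hj.le) hF (hm10 i hi j hj) (hm11 i hi j hj)
      have e2 := segInt_eq (hconvSQ i j) (hfSQ i hi.le j hj.le) hF (hm00 i hi j hj) (hm01 i hi j hj)
      have e3 := segInt_eq (hconvSQ i j) (hfSQ i hi.le j hj.le) hF (hm01 i hi j hj) (hm11 i hi j hj)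
      have e4 := segInt_eq (hconvSQ i j) (hfSQ i hi.le j hj.le) hF (hm00 i hi j hj) (hm10 i hi j hj)
      rw [hHdef]
      simp only
      rw [e1, e2, e3, e4]
      ring
    have hdiff : A (i+1) - A i = ∑ j ∈ Finset.range N, (H (j+1) - H j) := by
      rw [hAdef]
      simp only
      rw [← Finset.sum_sub_distrib]
      exact Finset.sum_congr rfl fun j hj => key j (Finset.mem_range.1 hj)
    rw [Finset.sum_range_sub] at hdiff
    have hper : H N = H 0 := by
      have hviN : ∀ i', i' ≤ L → v i' N = v i' 0 := by
        intro i' hi'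
        show σ (X i', T N) = σ (X i', T 0)
        rw [hTN, hT0]
        exact (hσc (X i') (hX01 i' hi')).symm
      rw [hHdef]
      simp only
      rw [hviN i hi.le, hviN (i+1) hi]
    rw [hper, sub_self] at hdiff
    exact sub_eq_zero.1 hdiff
  -- last row vanishes
  have hAL : A L = 0 := by
    have hvL : ∀ j, j ≤ N → v L j = cc := by
      intro j hj
      show σ (X L, T j) = cc
      rw [hXL]
      exact hcc (T j) (hT01 j hj)
    rw [hAdef]
    simp only
    refine Finset.sum_eq_zero fun j hj => ?_
    rw [hvL j (Finset.mem_range.1 hj).le, hvL (j+1) (Finset.mem_range.1 hj)]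
    exact segInt_self f cc
  -- conclude
  have hchain : A L = A 0 := by
    have h1 : A L - A 0 = ∑ i ∈ Finset.range L, (A (i+1) - A i) := (Finset.sum_range_sub A L).symm
    have h2 : ∑ i ∈ Finset.range L, (A (i+1) - A i) = 0 :=
      Finset.sum_eq_zero fun i hi => sub_eq_zero.2 (hstep i (Finset.mem_range.1 hi))
    rw [h2] at h1
    exact sub_eq_zero.1 h1
  rw [hA0, ← hchain, hAL]
end

section
/- Let U ⊆ ℂ be open and let γ₀, γ₁ be two closed piecewise C¹ paths on [0,1] with images in U that are homotopic (as loops) in U in the sense of mathlib's Path.Homotopic relation restricted to U. Then for every holomorphic f on U, the contour integrals of f along γ₀ and γ₁ agree. -/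
open Set intervalIntegral

open Complex
open scoped Interval

noncomputable section CauchyHomotopyAux


/-- open square -/
def SqV (c : ℂ) (ε : ℝ) : Set ℂ := Ioo (c.re - ε) (c.re + ε) ×ℂ Ioo (c.im - ε) (c.im + ε)

lemma sqV_isOpen (c : ℂ) (ε : ℝ) : IsOpen (SqV c ε) := isOpen_Ioo.reProdIm isOpen_Ioo

lemma sqV_convex (c : ℂ) (ε : ℝ) : Convex ℝ (SqV c ε) :=
  ((convex_Ioo _ _).linear_preimage reLm).inter ((convex_Ioo _ _).linear_preimage imLm)

lemma sqV_self {c : ℂ} {ε : ℝ} (hε : 0 < ε) : c ∈ SqV c ε := by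
  constructor <;> constructor <;> simp <;> linarith

lemma mem_sqV_iff {c z : ℂ} {ε : ℝ} : z ∈ SqV c ε ↔ |z.re - c.re| < ε ∧ |z.im - c.im| < ε := by
  simp [SqV, mem_reProdIm, abs_sub_lt_iff, mem_Ioo]; constructor <;> rintro ⟨⟨a,b⟩,⟨d,e⟩⟩ <;>
    exact ⟨⟨by linarith, by linarith⟩, ⟨by linarith, by linarith⟩⟩

lemma ball_subset_sqV (c : ℂ) (ε : ℝ) : Metric.ball c ε ⊆ SqV c ε := by
  intro z hz
  rw [Metric.mem_ball, Complex.dist_eq] at hz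
  rw [mem_sqV_iff]
  constructor
  · exact lt_of_le_of_lt (by simpa using Complex.abs_re_le_norm (z - c)) hz
  · exact lt_of_le_of_lt (by simpa using Complex.abs_im_le_norm (z - c)) hz

lemma sqV_subset_ball (c : ℂ) {ε : ℝ} (hε : 0 < ε) : SqV c ε ⊆ Metric.ball c (2*ε) := by
  intro z hz
  rw [mem_sqV_iff] at hz
  rw [Metric.mem_ball, Complex.dist_eq]
  calc ‖z - c‖ ≤ |(z-c).re| + |(z-c).im| := Complex.norm_le_abs_re_add_abs_im _
  _ < 2 * ε := by simp only [Complex.sub_re, Complex.sub_im] at *; linarith [hz.1, hz.2]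






set_option maxHeartbeats 2000000 in
lemma exists_primitive {f : ℂ → ℂ} {c : ℂ} {ε : ℝ} (hε : 0 < ε)
    (hf : DifferentiableOn ℂ f (SqV c ε)) :
    ∃ g : ℂ → ℂ, ∀ z ∈ SqV c ε, HasDerivAt g (f z) z := by
  set R : Set ℝ := Ioo (c.re - ε) (c.re + ε) with hR
  set T : Set ℝ := Ioo (c.im - ε) (c.im + ε) with hT
  have hcR : c.re ∈ R := by simp [hR]; linarith
  have hcT : c.im ∈ T := by simp [hT]; linarith
  have hmem : ∀ {a b : ℝ}, a ∈ R → b ∈ T → ((a:ℂ) + (b:ℂ)*I) ∈ SqV c ε := by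
    intro a b ha hb
    rw [SqV, mem_reProdIm]
    simpa using ⟨ha, hb⟩
  have hsub : ∀ {a₁ a₂ b₁ b₂ : ℝ}, a₁ ∈ R → a₂ ∈ R → b₁ ∈ T → b₂ ∈ T →
      [[a₁, a₂]] ×ℂ [[b₁, b₂]] ⊆ SqV c ε := by
    intro a₁ a₂ b₁ b₂ ha₁ ha₂ hb₁ hb₂ z hz
    rw [mem_reProdIm] at hz
    rw [SqV, mem_reProdIm]
    exact ⟨ordConnected_Ioo.uIcc_subset ha₁ ha₂ hz.1, ordConnected_Ioo.uIcc_subset hb₁ hb₂ hz.2⟩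
  have hcont := hf.continuousOn
  have hhor : ∀ {a₁ a₂ b : ℝ}, a₁ ∈ R → a₂ ∈ R → b ∈ T →
      IntervalIntegrable (fun x : ℝ => f ((x:ℂ) + (b:ℂ)*I)) MeasureTheory.volume a₁ a₂ := by
    intro a₁ a₂ b ha₁ ha₂ hb
    apply ContinuousOn.intervalIntegrable
    apply hcont.comp (Continuous.continuousOn (by continuity))
    intro x hx
    exact hmem (ordConnected_Ioo.uIcc_subset ha₁ ha₂ hx) hb
  have hver : ∀ {a b₁ b₂ : ℝ}, a ∈ R → b₁ ∈ T → b₂ ∈ T →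
      IntervalIntegrable (fun y : ℝ => f ((a:ℂ) + (y:ℂ)*I)) MeasureTheory.volume b₁ b₂ := by
    intro a b₁ b₂ ha hb₁ hb₂
    apply ContinuousOn.intervalIntegrable
    apply hcont.comp (Continuous.continuousOn (by continuity))
    intro y hy
    exact hmem ha (ordConnected_Ioo.uIcc_subset hb₁ hb₂ hy)
  have hrect : ∀ {a₁ a₂ b₁ b₂ : ℝ}, a₁ ∈ R → a₂ ∈ R → b₁ ∈ T → b₂ ∈ T →
      (∫ x in a₁..a₂, f ((x:ℂ) + (b₁:ℂ)*I)) - (∫ x in a₁..a₂, f ((x:ℂ) + (b₂:ℂ)*I)) +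
        I * (∫ y in b₁..b₂, f ((a₂:ℂ) + (y:ℂ)*I)) - I * (∫ y in b₁..b₂, f ((a₁:ℂ) + (y:ℂ)*I)) = 0 := by
    intro a₁ a₂ b₁ b₂ ha₁ ha₂ hb₁ hb₂
    have := Complex.integral_boundary_rect_eq_zero_of_differentiableOn f ((a₁:ℂ) + (b₁:ℂ)*I)
      ((a₂:ℂ) + (b₂:ℂ)*I) (hf.mono (by simpa using hsub ha₁ ha₂ hb₁ hb₂))
    simpa [smul_eq_mul] using this
  set g : ℂ → ℂ := fun z =>
    (∫ x in c.re..z.re, f ((x:ℂ) + (c.im:ℂ)*I)) + I * ∫ y in c.im..z.im, f ((z.re:ℂ) + (y:ℂ)*I)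
    with hg
  have hreT : ∀ {z : ℂ}, z ∈ SqV c ε → z.re ∈ R ∧ z.im ∈ T := by
    intro z hz; rw [SqV, mem_reProdIm] at hz; exact hz
  have hdiff : ∀ z₀ ∈ SqV c ε, ∀ w ∈ SqV c ε, g w - g z₀ =
      (∫ x in z₀.re..w.re, f ((x:ℂ) + (z₀.im:ℂ)*I)) +
        I * ∫ y in z₀.im..w.im, f ((w.re:ℂ) + (y:ℂ)*I) := by
    intro z₀ hz₀ w hw
    obtain ⟨hz₀R, hz₀T⟩ := hreT hz₀
    obtain ⟨hwR, hwT⟩ := hreT hw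
    have e1 : (∫ x in c.re..w.re, f ((x:ℂ) + (c.im:ℂ)*I))
        - (∫ x in c.re..z₀.re, f ((x:ℂ) + (c.im:ℂ)*I))
        = ∫ x in z₀.re..w.re, f ((x:ℂ) + (c.im:ℂ)*I) :=
      integral_interval_sub_left (hhor hcR hwR hcT) (hhor hcR hz₀R hcT)
    have e2 : (∫ y in c.im..z₀.im, f ((w.re:ℂ) + (y:ℂ)*I)) +
        (∫ y in z₀.im..w.im, f ((w.re:ℂ) + (y:ℂ)*I)) = ∫ y in c.im..w.im, f ((w.re:ℂ) + (y:ℂ)*I) :=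
      integral_add_adjacent_intervals (hver hwR hcT hz₀T) (hver hwR hz₀T hwT)
    have e3 := hrect hz₀R hwR hcT hz₀T
    simp only [hg]
    linear_combination e1 + I * e2.symm + e3
  refine ⟨g, ?_⟩
  intro z₀ hz₀
  rw [hasDerivAt_iff_isLittleO, Asymptotics.isLittleO_iff]
  intro C hC
  obtain ⟨r₁, hr₁, hball⟩ := Metric.isOpen_iff.1 (isOpen_Ioo.reProdIm isOpen_Ioo : IsOpen (SqV c ε)) z₀ hz₀
  have hfc : ContinuousAt f z₀ :=
    hcont.continuousAt ((isOpen_Ioo.reProdIm isOpen_Ioo : IsOpen (SqV c ε)).mem_nhds hz₀)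
  obtain ⟨r₂, hr₂, hfr⟩ := Metric.continuousAt_iff.1 hfc (C/2) (by linarith)
  set r := min r₁ r₂ with hrdef
  have hr : 0 < r := lt_min hr₁ hr₂
  filter_upwards [Metric.ball_mem_nhds z₀ (by linarith : (0:ℝ) < r/2)] with w hwball
  have hwz : ‖w - z₀‖ < r / 2 := by
    rw [Metric.mem_ball, Complex.dist_eq] at hwball; exact hwball
  have hwV : w ∈ SqV c ε := hball (by rw [Metric.mem_ball]; calc dist w z₀ < r/2 := hwball
                                                                _ ≤ r₁ := by simp [hrdef]; linarith [min_le_left r₁ r₂]; )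
  obtain ⟨hz₀R, hz₀T⟩ := hreT hz₀
  obtain ⟨hwR, hwT⟩ := hreT hwV
  -- the difference identity
  have hD := hdiff z₀ hz₀ w hwV
  -- rewrite the linear term
  have hwdec : w - z₀ = ((w.re - z₀.re : ℝ) : ℂ) + ((w.im - z₀.im : ℝ) : ℂ) * I := by
    simp [Complex.ext_iff]
  have hconst1 : (∫ _x in z₀.re..w.re, f z₀) = ((w.re - z₀.re : ℝ) : ℂ) * f z₀ := by
    simp [intervalIntegral.integral_const, smul_eq_mul]
  have hconst2 : (∫ _y in z₀.im..w.im, f z₀) = ((w.im - z₀.im : ℝ) : ℂ) * f z₀ := by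
    simp [intervalIntegral.integral_const, smul_eq_mul]
  have hsplit1 : (∫ x in z₀.re..w.re, (f ((x:ℂ) + (z₀.im:ℂ)*I) - f z₀))
      = (∫ x in z₀.re..w.re, f ((x:ℂ) + (z₀.im:ℂ)*I)) - ((w.re - z₀.re : ℝ) : ℂ) * f z₀ := by
    rw [intervalIntegral.integral_sub (hhor hz₀R hwR hz₀T) (intervalIntegrable_const), hconst1]
  have hsplit2 : (∫ y in z₀.im..w.im, (f ((w.re:ℂ) + (y:ℂ)*I) - f z₀))
      = (∫ y in z₀.im..w.im, f ((w.re:ℂ) + (y:ℂ)*I)) - ((w.im - z₀.im : ℝ) : ℂ) * f z₀ := by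
    rw [intervalIntegral.integral_sub (hver hwR hz₀T hwT) (intervalIntegrable_const), hconst2]
  have key : g w - g z₀ - (w - z₀) • f z₀ =
      (∫ x in z₀.re..w.re, (f ((x:ℂ) + (z₀.im:ℂ)*I) - f z₀)) +
        I * (∫ y in z₀.im..w.im, (f ((w.re:ℂ) + (y:ℂ)*I) - f z₀)) := by
    rw [smul_eq_mul, hsplit1, hsplit2, hD, hwdec]; ring
  rw [key]
  -- bounds
  have habsre : |w.re - z₀.re| ≤ ‖w - z₀‖ := by
    have h := Complex.abs_re_le_norm (w - z₀); rwa [Complex.sub_re] at h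
  have habsim : |w.im - z₀.im| ≤ ‖w - z₀‖ := by
    have h := Complex.abs_im_le_norm (w - z₀); rwa [Complex.sub_im] at h
  have hb1 : ‖∫ x in z₀.re..w.re, (f ((x:ℂ) + (z₀.im:ℂ)*I) - f z₀)‖ ≤ C/2 * |w.re - z₀.re| := by
    apply intervalIntegral.norm_integral_le_of_norm_le_const
    intro x hx
    have hx' : |x - z₀.re| ≤ |w.re - z₀.re| := by
      have := Set.abs_sub_left_of_mem_uIcc (Set.uIoc_subset_uIcc hx)
      simpa using this
    have hdist : dist ((x:ℂ) + (z₀.im:ℂ)*I) z₀ < r₂ := by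
      rw [Complex.dist_eq]
      have : (x:ℂ) + (z₀.im:ℂ)*I - z₀ = ((x - z₀.re : ℝ) : ℂ) := by simp [Complex.ext_iff]
      rw [this]
      calc ‖((x - z₀.re : ℝ) : ℂ)‖ = |x - z₀.re| := by rw [Complex.norm_real, Real.norm_eq_abs]
        _ ≤ |w.re - z₀.re| := hx'
        _ ≤ ‖w - z₀‖ := habsre
        _ < r/2 := hwz
        _ ≤ r₂ := by linarith [min_le_right r₁ r₂]
    exact le_of_lt (by simpa [dist_eq_norm] using hfr hdist)
  have hb2 : ‖∫ y in z₀.im..w.im, (f ((w.re:ℂ) + (y:ℂ)*I) - f z₀)‖ ≤ C/2 * |w.im - z₀.im| := by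
    apply intervalIntegral.norm_integral_le_of_norm_le_const
    intro y hy
    have hy' : |y - z₀.im| ≤ |w.im - z₀.im| := by
      have := Set.abs_sub_left_of_mem_uIcc (Set.uIoc_subset_uIcc hy)
      simpa using this
    have hdist : dist ((w.re:ℂ) + (y:ℂ)*I) z₀ < r₂ := by
      rw [Complex.dist_eq]
      have hζ : (w.re:ℂ) + (y:ℂ)*I - z₀ = ((w.re - z₀.re : ℝ) : ℂ) + ((y - z₀.im : ℝ) : ℂ) * I := by
        simp [Complex.ext_iff]
      rw [hζ]
      calc ‖((w.re - z₀.re : ℝ) : ℂ) + ((y - z₀.im : ℝ) : ℂ) * I‖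
          ≤ ‖((w.re - z₀.re : ℝ) : ℂ)‖ + ‖((y - z₀.im : ℝ) : ℂ) * I‖ := norm_add_le _ _
        _ = |w.re - z₀.re| + |y - z₀.im| := by
            rw [norm_mul, Complex.norm_I, mul_one, Complex.norm_real, Complex.norm_real, Real.norm_eq_abs, Real.norm_eq_abs]
        _ ≤ ‖w - z₀‖ + ‖w - z₀‖ := by
            have := hy'.trans habsim; linarith [habsre]
        _ < r := by linarith
        _ ≤ r₂ := min_le_right r₁ r₂
    exact le_of_lt (by simpa [dist_eq_norm] using hfr hdist)
  calc ‖(∫ x in z₀.re..w.re, (f ((x:ℂ) + (z₀.im:ℂ)*I) - f z₀)) +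
        I * (∫ y in z₀.im..w.im, (f ((w.re:ℂ) + (y:ℂ)*I) - f z₀))‖
      ≤ ‖∫ x in z₀.re..w.re, (f ((x:ℂ) + (z₀.im:ℂ)*I) - f z₀)‖ +
        ‖I * (∫ y in z₀.im..w.im, (f ((w.re:ℂ) + (y:ℂ)*I) - f z₀))‖ := norm_add_le _ _
    _ ≤ C/2 * |w.re - z₀.re| + C/2 * |w.im - z₀.im| := by
        rw [norm_mul, Complex.norm_I, one_mul]
        exact add_le_add hb1 hb2
    _ ≤ C/2 * ‖w - z₀‖ + C/2 * ‖w - z₀‖ := by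
        have := habsre; have := habsim; nlinarith
    _ = C * ‖w - z₀‖ := by ring





/-- FTC-2 allowing finitely many exceptional points. -/
lemma ftc_finset (F φ : ℝ → ℂ) (s : Finset ℝ) :
    ∀ u v : ℝ, u ≤ v → ContinuousOn φ (Icc u v) →
    (∀ x ∈ Ioo u v, x ∉ s → HasDerivAt φ (F x) x) →
    IntervalIntegrable F MeasureTheory.volume u v →
    ∫ t in u..v, F t = φ v - φ u := by
  induction s using Finset.induction with
  | empty =>
    intro u v huv hc hd hi
    exact integral_eq_sub_of_hasDerivAt_of_le huv hc (fun x hx => hd x hx (by simp)) hi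
  | @insert c s hc ih =>
    intro u v huv hcont hd hi
    by_cases hcuv : c ∈ Ioo u v
    · have hsub1 : uIcc u c ⊆ uIcc u v := by
        rw [uIcc_of_le huv, uIcc_of_le hcuv.1.le]
        exact Icc_subset_Icc le_rfl hcuv.2.le
      have hsub2 : uIcc c v ⊆ uIcc u v := by
        rw [uIcc_of_le huv, uIcc_of_le hcuv.2.le]
        exact Icc_subset_Icc hcuv.1.le le_rfl
      have h1 : ∫ t in u..c, F t = φ c - φ u := by
        refine ih u c hcuv.1.le (hcont.mono (Icc_subset_Icc le_rfl hcuv.2.le)) ?_ (hi.mono_set hsub1)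
        intro x hx hxs
        refine hd x ⟨hx.1, hx.2.trans hcuv.2⟩ ?_
        simp only [Finset.mem_insert]
        rintro (rfl | h)
        · exact absurd hx.2 (lt_irrefl _)
        · exact hxs h
      have h2 : ∫ t in c..v, F t = φ v - φ c := by
        refine ih c v hcuv.2.le (hcont.mono (Icc_subset_Icc hcuv.1.le le_rfl)) ?_ (hi.mono_set hsub2)
        intro x hx hxs
        refine hd x ⟨hcuv.1.trans hx.1, hx.2⟩ ?_
        simp only [Finset.mem_insert]
        rintro (rfl | h)
        · exact absurd hx.1 (lt_irrefl _)
        · exact hxs h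
      rw [← integral_add_adjacent_intervals (hi.mono_set hsub1) (hi.mono_set hsub2), h1, h2]
      ring
    · refine ih u v huv hcont ?_ hi
      intro x hx hxs
      refine hd x hx ?_
      simp only [Finset.mem_insert]
      rintro (rfl | h)
      · exact hcuv hx
      · exact hxs h

section Piecewise

variable {γ : ℝ → ℂ} {n : ℕ} {p : ℕ → ℝ}

lemma p_strict_mono (hmono : ∀ i < n, p i < p (i + 1)) :
    ∀ j ≤ n, ∀ i < j, p i < p j := by
  intro j hj
  induction j with
  | zero => intro i hi; omega
  | succ k ihk =>
    intro i hi
    rcases Nat.lt_succ_iff_lt_or_eq.1 hi with h | rfl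
    · exact (ihk (by omega) i h).trans (hmono k (by omega))
    · exact hmono i (by omega)

lemma locate (hn : 0 < n) (hmono : ∀ i < n, p i < p (i + 1)) {t : ℝ}
    (h0 : p 0 < t) (h1 : t < p n) (hne : ∀ i ≤ n, t ≠ p i) :
    ∃ i < n, t ∈ Ioo (p i) (p (i + 1)) := by
  classical
  set Fs : Finset ℕ := (Finset.range (n + 1)).filter (fun i => p i < t) with hFs
  have h0F : 0 ∈ Fs := by simp [hFs, h0, Nat.lt_succ_iff, hn.le]
  have hFne : Fs.Nonempty := ⟨0, h0F⟩
  set i := Fs.max' hFne with hi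
  have hiF : i ∈ Fs := Fs.max'_mem hFne
  have hin : i ≤ n := by
    have := (Finset.mem_filter.1 hiF).1
    simpa [Nat.lt_succ_iff] using this
  have hpit : p i < t := (Finset.mem_filter.1 hiF).2
  have hilt : i < n := by
    rcases lt_or_eq_of_le hin with h | h
    · exact h
    · exfalso; rw [h] at hpit; linarith
  refine ⟨i, hilt, hpit, ?_⟩
  have hle : t ≤ p (i + 1) := by
    by_contra hlt
    push_neg at hlt
    have : i + 1 ∈ Fs := by
      simp only [hFs, Finset.mem_filter, Finset.mem_range]
      exact ⟨by omega, hlt⟩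
    have := Fs.le_max' _ this
    omega
  exact lt_of_le_of_ne hle (hne (i + 1) (by omega))


lemma p_mono_le (hmono : ∀ i < n, p i < p (i + 1)) {i j : ℕ} (hij : i ≤ j) (hj : j ≤ n) :
    p i ≤ p j := by
  rcases lt_or_eq_of_le hij with h | rfl
  · exact (p_strict_mono hmono j hj i h).le
  · exact le_rfl

variable {f : ℂ → ℂ}

lemma pc1_hasDerivAt (hn : 0 < n) (hp0 : p 0 = 0) (hpn : p n = 1)
    (hmono : ∀ i < n, p i < p (i + 1))
    (hcd : ∀ i < n, ContDiffOn ℝ 1 γ (Icc (p i) (p (i + 1))))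
    {t : ℝ} (ht : t ∈ Ioo (0:ℝ) 1) (hne : ∀ i ≤ n, t ≠ p i) :
    HasDerivAt γ (deriv γ t) t := by
  obtain ⟨i, hi, hti⟩ := locate hn hmono (by rw [hp0]; exact ht.1) (by rw [hpn]; exact ht.2) hne
  have hdiff : DifferentiableAt ℝ γ t :=
    ((hcd i hi).differentiableOn one_ne_zero t (Ioo_subset_Icc_self hti)).differentiableAt
      (Icc_mem_nhds hti.1 hti.2)
  exact hdiff.hasDerivAt

lemma pc1_integrable (hn : 0 < n) (hp0 : p 0 = 0) (hpn : p n = 1)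
    (hmono : ∀ i < n, p i < p (i + 1))
    (hcd : ∀ i < n, ContDiffOn ℝ 1 γ (Icc (p i) (p (i + 1))))
    (hfγ : ContinuousOn (fun t => f (γ t)) (Icc (0:ℝ) 1)) :
    IntervalIntegrable (fun t => f (γ t) * deriv γ t) MeasureTheory.volume 0 1 := by
  have piece : ∀ i < n, IntervalIntegrable (fun t => f (γ t) * deriv γ t)
      MeasureTheory.volume (p i) (p (i + 1)) := by
    intro i hi
    have hlt := hmono i hi
    have hsubI : Icc (p i) (p (i + 1)) ⊆ Icc 0 1 := by
      apply Icc_subset_Icc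
      · rw [← hp0]; exact p_mono_le hmono (Nat.zero_le i) hi.le
      · rw [← hpn]; exact p_mono_le hmono (by omega) le_rfl
    have hdcont : ContinuousOn (derivWithin γ (Icc (p i) (p (i + 1)))) (Icc (p i) (p (i + 1))) :=
      (hcd i hi).continuousOn_derivWithin (uniqueDiffOn_Icc hlt) le_rfl
    have hhcont : ContinuousOn (fun t => f (γ t) * derivWithin γ (Icc (p i) (p (i + 1))) t)
        (Icc (p i) (p (i + 1))) := (hfγ.mono hsubI).mul hdcont
    have heq : EqOn (fun t => f (γ t) * derivWithin γ (Icc (p i) (p (i + 1))) t)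
        (fun t => f (γ t) * deriv γ t) (Ioo (p i) (p (i + 1))) := by
      intro t ht
      have hda : DifferentiableAt ℝ γ t :=
        ((hcd i hi).differentiableOn one_ne_zero t (Ioo_subset_Icc_self ht)).differentiableAt
          (Icc_mem_nhds ht.1 ht.2)
      have hdw : derivWithin γ (Icc (p i) (p (i + 1))) t = deriv γ t :=
        hda.derivWithin ((uniqueDiffOn_Icc hlt) t (Ioo_subset_Icc_self ht))
      simp only [hdw]
    have hint2 : MeasureTheory.IntegrableOn (fun t => f (γ t) * deriv γ t)
        (Ioo (p i) (p (i + 1))) MeasureTheory.volume :=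
      ((hhcont.integrableOn_Icc).mono_set Ioo_subset_Icc_self).congr_fun heq measurableSet_Ioo
    exact (intervalIntegrable_iff_integrableOn_Ioo_of_le hlt.le).2 hint2
  have chain : ∀ k, k ≤ n → IntervalIntegrable (fun t => f (γ t) * deriv γ t)
      MeasureTheory.volume (p 0) (p k) := by
    intro k
    induction k with
    | zero => intro _; exact IntervalIntegrable.refl
    | succ k ih => intro hk; exact (ih (by omega)).trans (piece k (by omega))
  have := chain n le_rfl
  rwa [hp0, hpn] at this

lemma key_seg (hγc : ContinuousOn γ (Icc 0 1)) (hn : 0 < n) (hp0 : p 0 = 0) (hpn : p n = 1)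
    (hmono : ∀ i < n, p i < p (i + 1))
    (hcd : ∀ i < n, ContDiffOn ℝ 1 γ (Icc (p i) (p (i + 1))))
    (hfγ : ContinuousOn (fun t => f (γ t)) (Icc (0:ℝ) 1))
    {u v : ℝ} (h0u : 0 ≤ u) (huv : u ≤ v) (hv1 : v ≤ 1)
    {V : Set ℂ} (g : ℂ → ℂ) (hg : ∀ z ∈ V, HasDerivAt g (f z) z)
    (hγV : ∀ t ∈ Icc u v, γ t ∈ V) :
    ∫ t in u..v, f (γ t) * deriv γ t = g (γ v) - g (γ u) := by
  classical
  apply ftc_finset _ (fun t => g (γ t)) ((Finset.range (n + 1)).image p) u v huv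
  · intro t ht
    exact ((hg (γ t) (hγV t ht)).differentiableAt.continuousAt).comp_continuousWithinAt
      ((hγc.mono (Icc_subset_Icc h0u hv1)) t ht)
  · intro x hx hxs
    have hne : ∀ i ≤ n, x ≠ p i := by
      intro i hi heq
      apply hxs
      simp only [Finset.mem_image, Finset.mem_range]
      exact ⟨i, by omega, heq.symm⟩
    have hdγ := pc1_hasDerivAt hn hp0 hpn hmono hcd
      ⟨lt_of_le_of_lt h0u hx.1, lt_of_lt_of_le hx.2 hv1⟩ hne
    exact (hg (γ x) (hγV x (Ioo_subset_Icc_self hx))).comp x hdγ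
  · refine (pc1_integrable hn hp0 hpn hmono hcd hfγ).mono_set ?_
    rw [uIcc_of_le huv, uIcc_of_le (zero_le_one' ℝ)]
    exact Icc_subset_Icc h0u hv1

end Piecewise


lemma primitive_diff_const {f : ℂ → ℂ} {V : Set ℂ} (hVo : IsOpen V) (hVc : Convex ℝ V)
    {g₁ g₂ : ℂ → ℂ} (h₁ : ∀ z ∈ V, HasDerivAt g₁ (f z) z) (h₂ : ∀ z ∈ V, HasDerivAt g₂ (f z) z)
    {a b : ℂ} (ha : a ∈ V) (hb : b ∈ V) : g₁ b - g₁ a = g₂ b - g₂ a := by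
  have key : g₁ b - g₂ b = g₁ a - g₂ a := by
    refine hVc.is_const_of_fderivWithin_eq_zero (𝕜 := ℂ) (f := fun z => g₁ z - g₂ z) ?_ ?_ hb ha
    · intro z hz
      exact (((h₁ z hz).sub (h₂ z hz)).differentiableAt).differentiableWithinAt
    · intro z hz
      have hd : HasDerivAt (fun z => g₁ z - g₂ z) 0 z := by
        have := (h₁ z hz).sub (h₂ z hz); rwa [sub_self] at this
      have hfd : HasFDerivAt (fun z => g₁ z - g₂ z) (0 : ℂ →L[ℂ] ℂ) z := by
        have h := hd.hasFDerivAt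
        have e : ContinuousLinearMap.toSpanSingleton ℂ (0:ℂ) = 0 := by ext; simp
        rwa [e] at h
      rw [fderivWithin_of_isOpen hVo hz, hfd.fderiv]
  linear_combination key
end CauchyHomotopyAux

set_option maxHeartbeats 2000000 in
theorem cauchy_loop_homotopic (U : Set ℂ) (hU : IsOpen U)
    (γ₀ γ₁ : ℝ → ℂ)
    (h₀ : PiecewiseC1On γ₀ 0 1) (h₁ : PiecewiseC1On γ₁ 0 1)
    (hc₀ : γ₀ 0 = γ₀ 1) (hc₁ : γ₁ 0 = γ₁ 1)
    (hU₀ : ∀ t ∈ Icc (0:ℝ) 1, γ₀ t ∈ U) (hU₁ : ∀ t ∈ Icc (0:ℝ) 1, γ₁ t ∈ U)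
    (H : ℝ × ℝ → ℂ) (hH : ContinuousOn H (Icc 0 1 ×ˢ Icc 0 1))
    (hHU : ∀ p ∈ Icc (0:ℝ) 1 ×ˢ Icc (0:ℝ) 1, H p ∈ U)
    (hH0 : ∀ x ∈ Icc (0:ℝ) 1, H (0, x) = γ₀ x)
    (hH1 : ∀ x ∈ Icc (0:ℝ) 1, H (1, x) = γ₁ x)
    (hHc : ∀ t ∈ Icc (0:ℝ) 1, H (t, 0) = H (t, 1))
    (f : ℂ → ℂ) (hf : DifferentiableOn ℂ f U) :
    ∫ t in (0:ℝ)..1, f (γ₀ t) * deriv γ₀ t = ∫ t in (0:ℝ)..1, f (γ₁ t) * deriv γ₁ t := by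
  classical
  obtain ⟨hγ₀c, n₀, p₀, hn₀, hp₀0, hp₀n, hm₀, hcd₀⟩ := h₀
  obtain ⟨hγ₁c, n₁, p₁, hn₁, hp₁0, hp₁n, hm₁, hcd₁⟩ := h₁
  have hfc : ContinuousOn f U := hf.continuousOn
  have hfγ₀ : ContinuousOn (fun t => f (γ₀ t)) (Icc (0:ℝ) 1) := hfc.comp hγ₀c hU₀
  have hfγ₁ : ContinuousOn (fun t => f (γ₁ t)) (Icc (0:ℝ) 1) := hfc.comp hγ₁c hU₁
  -- compact image and thickening
  set K := H '' (Icc (0:ℝ) 1 ×ˢ Icc (0:ℝ) 1) with hKdef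
  have hK : IsCompact K := (isCompact_Icc.prod isCompact_Icc).image_of_continuousOn hH
  have hKU : K ⊆ U := by rintro _ ⟨q, hq, rfl⟩; exact hHU q hq
  obtain ⟨r, hr, hrK⟩ := hK.exists_thickening_subset_open hU hKU
  set ε := r / 2 with hεdef
  have hε : 0 < ε := by positivity
  have hsqU : ∀ z ∈ K, SqV z ε ⊆ U := by
    intro z hz
    refine (sqV_subset_ball z hε).trans ?_
    have h2ε : 2 * ε = r := by rw [hεdef]; ring
    rw [h2ε]
    exact (fun w hw => hrK (Metric.mem_thickening_iff.2 ⟨z, hz, Metric.mem_ball.1 hw⟩))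
  have hprim : ∀ c : ℂ, ∃ g : ℂ → ℂ, c ∈ K → ∀ w ∈ SqV c ε, HasDerivAt g (f w) w := by
    intro c
    by_cases hc : c ∈ K
    · obtain ⟨g, hg⟩ := exists_primitive hε (hf.mono (hsqU c hc))
      exact ⟨g, fun _ => hg⟩
    · exact ⟨0, fun h => absurd h hc⟩
  choose G hG using hprim
  -- uniform continuity and grid
  have huc := (isCompact_Icc.prod isCompact_Icc).uniformContinuousOn_of_continuous hH
  obtain ⟨δ, hδ, hδH⟩ := (Metric.uniformContinuousOn_iff_le.1 huc) (ε/2) (by positivity)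
  obtain ⟨N', hN'⟩ := exists_nat_one_div_lt hδ
  set N : ℕ := N' + 1 with hNdef
  have hNR : (0:ℝ) < (N:ℝ) := by positivity
  have hN : (1:ℝ)/(N:ℝ) < δ := by
    rw [hNdef]; push_cast; exact hN'
  set s : ℕ → ℝ := fun i => (i:ℝ)/(N:ℝ) with hsdef
  have hs0 : s 0 = 0 := by simp [hsdef]
  have hsN : s N = 1 := by show (N:ℝ)/(N:ℝ) = 1; exact div_self hNR.ne'
  have hsmem : ∀ i ≤ N, s i ∈ Icc (0:ℝ) 1 := by
    intro i hi
    constructor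
    · positivity
    · rw [hsdef, div_le_one hNR]
      exact_mod_cast hi
  have hsmono : ∀ i, s i ≤ s (i+1) := by
    intro i
    rw [hsdef]
    apply div_le_div_of_nonneg_right (c := (N:ℝ)) ?_ ?_
    · push_cast; linarith
    · exact hNR.le
  have hsstep : ∀ i : ℕ, s (i+1) - s i = 1/(N:ℝ) := by
    intro i; rw [hsdef]; push_cast; field_simp; ring
  -- the key membership lemma
  have hgrid : ∀ {a b a' b' : ℝ}, a ∈ Icc (0:ℝ) 1 → b ∈ Icc (0:ℝ) 1 → a' ∈ Icc (0:ℝ) 1 →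
      b' ∈ Icc (0:ℝ) 1 → |a - a'| ≤ 1/(N:ℝ) → |b - b'| ≤ 1/(N:ℝ) →
      H (a, b) ∈ SqV (H (a', b')) ε := by
    intro a b a' b' ha hb ha' hb' hda hdb
    have hdist : dist ((a,b) : ℝ × ℝ) ((a',b') : ℝ × ℝ) ≤ δ := by
      rw [Prod.dist_eq]
      simp only [Real.dist_eq]
      exact max_le (hda.trans hN.le) (hdb.trans hN.le)
    have := hδH (a,b) (mk_mem_prod ha hb) (a',b') (mk_mem_prod ha' hb') hdist
    apply ball_subset_sqV
    rw [Metric.mem_ball]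
    calc dist (H (a,b)) (H (a',b')) ≤ ε/2 := this
      _ < ε := by linarith
  -- grid points and primitives
  set z : ℕ → ℕ → ℂ := fun i j => H (s j, s i) with hzdef
  have hzK : ∀ i ≤ N, ∀ j ≤ N, z i j ∈ K := by
    intro i hi j hj
    exact ⟨(s j, s i), mk_mem_prod (hsmem j hj) (hsmem i hi), rfl⟩
  -- sums
  set Bot : ℕ → ℂ := fun j => ∑ i ∈ Finset.range N,
    (G (z i j) (H (s j, s (i+1))) - G (z i j) (H (s j, s i))) with hBotdef
  set Top : ℕ → ℂ := fun j => ∑ i ∈ Finset.range N,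
    (G (z i j) (H (s (j+1), s (i+1))) - G (z i j) (H (s (j+1), s i))) with hTopdef
  have habs_step : ∀ i : ℕ, |s (i+1) - s i| ≤ 1/(N:ℝ) := by
    intro i; rw [hsstep i, _root_.abs_of_nonneg (by positivity : (0:ℝ) ≤ 1/(N:ℝ))]
  have habs_self : ∀ x : ℝ, |x - x| ≤ 1/(N:ℝ) := by
    intro x
    simp only [sub_self, abs_zero]
    positivity
  have habs_mem : ∀ i : ℕ, ∀ t ∈ Icc (s i) (s (i+1)), |t - s i| ≤ 1/(N:ℝ) := by
    intro i t ht
    rw [_root_.abs_of_nonneg (by linarith [ht.1] : (0:ℝ) ≤ t - s i)]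
    have := ht.2
    linarith [hsstep i]
  have hmemSq : ∀ (a b a' b' : ℕ), a ≤ N → b ≤ N → a' ≤ N → b' ≤ N →
      |s a - s a'| ≤ 1/(N:ℝ) → |s b - s b'| ≤ 1/(N:ℝ) → H (s a, s b) ∈ SqV (z b' a') ε := by
    intro a b a' b' ha hb ha' hb' h1 h2
    exact hgrid (hsmem a ha) (hsmem b hb) (hsmem a' ha') (hsmem b' hb') h1 h2
  have habs_step' : ∀ i : ℕ, |s i - s (i+1)| ≤ 1/(N:ℝ) := by
    intro i; rw [abs_sub_comm]; exact habs_step i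
  -- Claim 1 : the integral of f over γ₀ equals Bot 0
  have hint₀ := pc1_integrable hn₀ hp₀0 hp₀n hm₀ hcd₀ hfγ₀
  have hint₁ := pc1_integrable hn₁ hp₁0 hp₁n hm₁ hcd₁ hfγ₁
  have hIccsub : ∀ k < N, Icc (s k) (s (k+1)) ⊆ Icc (0:ℝ) 1 := by
    intro k hk
    exact Icc_subset_Icc (hsmem k (by omega)).1 (hsmem (k+1) (by omega)).2
  have huIccsub : ∀ k < N, uIcc (s k) (s (k+1)) ⊆ uIcc (0:ℝ) 1 := by
    intro k hk
    rw [uIcc_of_le (hsmono k), uIcc_of_le (zero_le_one' ℝ)]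
    exact hIccsub k hk
  have claim1 : ∫ t in (0:ℝ)..1, f (γ₀ t) * deriv γ₀ t = Bot 0 := by
    have hadd := intervalIntegral.sum_integral_adjacent_intervals (μ := MeasureTheory.volume)
      (a := s) (n := N) (f := fun t => f (γ₀ t) * deriv γ₀ t)
      (fun k hk => hint₀.mono_set (huIccsub k hk))
    rw [hs0, hsN] at hadd
    rw [← hadd, hBotdef]
    apply Finset.sum_congr rfl
    intro i hi
    rw [Finset.mem_range] at hi
    have e1 : H (s 0, s (i+1)) = γ₀ (s (i+1)) := by rw [hs0]; exact hH0 _ (hsmem (i+1) (by omega))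
    have e2 : H (s 0, s i) = γ₀ (s i) := by rw [hs0]; exact hH0 _ (hsmem i (by omega))
    rw [e1, e2]
    apply key_seg hγ₀c hn₀ hp₀0 hp₀n hm₀ hcd₀ hfγ₀ (hsmem i (by omega)).1 (hsmono i)
      (hsmem (i+1) (by omega)).2 (G (z i 0)) (hG _ (hzK i (by omega) 0 (by omega)))
    intro t ht
    have htm : t ∈ Icc (0:ℝ) 1 := hIccsub i hi ht
    rw [← hH0 t htm]
    have h0m : |(0:ℝ) - s 0| ≤ 1/(N:ℝ) := by
      rw [hs0, sub_self, abs_zero]; positivity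
    exact hgrid (left_mem_Icc.2 zero_le_one) htm (hsmem 0 (by omega)) (hsmem i (by omega)) h0m
      (habs_mem i t ht)
  -- Claim 2 : the integral of f over γ₁ equals Top N'
  have claim2 : ∫ t in (0:ℝ)..1, f (γ₁ t) * deriv γ₁ t = Top N' := by
    have hadd := intervalIntegral.sum_integral_adjacent_intervals (μ := MeasureTheory.volume)
      (a := s) (n := N) (f := fun t => f (γ₁ t) * deriv γ₁ t)
      (fun k hk => hint₁.mono_set (huIccsub k hk))
    rw [hs0, hsN] at hadd
    rw [← hadd, hTopdef]
    apply Finset.sum_congr rfl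
    intro i hi
    rw [Finset.mem_range] at hi
    have hsN' : s (N' + 1) = 1 := by rw [← hNdef]; exact hsN
    have e1 : H (s (N'+1), s (i+1)) = γ₁ (s (i+1)) := by
      rw [hsN']; exact hH1 _ (hsmem (i+1) (by omega))
    have e2 : H (s (N'+1), s i) = γ₁ (s i) := by rw [hsN']; exact hH1 _ (hsmem i (by omega))
    rw [e1, e2]
    apply key_seg hγ₁c hn₁ hp₁0 hp₁n hm₁ hcd₁ hfγ₁ (hsmem i (by omega)).1 (hsmono i)
      (hsmem (i+1) (by omega)).2 (G (z i N')) (hG _ (hzK i (by omega) N' (by omega)))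
    intro t ht
    have htm : t ∈ Icc (0:ℝ) 1 := hIccsub i hi ht
    rw [← hH1 t htm, ← hsN']
    exact hgrid (hsmem (N'+1) (by omega)) htm (hsmem N' (by omega))
      (hsmem i (by omega)) (habs_step N') (habs_mem i t ht)
  -- Claim 3 : Bot j = Top j for j < N
  have claim3 : ∀ j < N, Bot j = Top j := by
    intro j hj
    set φ : ℕ → ℂ := fun i => G (z i j) (H (s j, s i)) - G (z i j) (H (s (j+1), s i)) with hφdef
    have tele := Finset.sum_range_sub φ N
    have hterm : ∀ i < N,
        (G (z i j) (H (s j, s (i+1))) - G (z i j) (H (s j, s i))) -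
          (G (z i j) (H (s (j+1), s (i+1))) - G (z i j) (H (s (j+1), s i)))
        = φ (i+1) - φ i := by
      intro i hi
      have hkey : G (z i j) (H (s j, s (i+1))) - G (z i j) (H (s (j+1), s (i+1)))
          = G (z (i+1) j) (H (s j, s (i+1))) - G (z (i+1) j) (H (s (j+1), s (i+1))) := by
        refine primitive_diff_const (f := f) ((sqV_isOpen _ _).inter (sqV_isOpen _ _))
          ((sqV_convex _ _).inter (sqV_convex _ _))
          (fun w hw => hG _ (hzK i (by omega) j (by omega)) w hw.1)
          (fun w hw => hG _ (hzK (i+1) (by omega) j (by omega)) w hw.2) ?_ ?_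
        · exact ⟨hmemSq (j+1) (i+1) j i (by omega) (by omega) (by omega) (by omega)
              (habs_step j) (habs_step i),
            hmemSq (j+1) (i+1) j (i+1) (by omega) (by omega) (by omega) (by omega)
              (habs_step j) (habs_self _)⟩
        · exact ⟨hmemSq j (i+1) j i (by omega) (by omega) (by omega) (by omega)
              (habs_self _) (habs_step i),
            hmemSq j (i+1) j (i+1) (by omega) (by omega) (by omega) (by omega)
              (habs_self _) (habs_self _)⟩
      simp only [hφdef]
      linear_combination hkey
    have hsum : Bot j - Top j = φ N - φ 0 := by
      rw [hBotdef, hTopdef, ← Finset.sum_sub_distrib, ← tele]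
      apply Finset.sum_congr rfl
      intro i hi
      exact hterm i (Finset.mem_range.1 hi)
    have hze : z N j = z 0 j := by
      show H (s j, s N) = H (s j, s 0)
      rw [hsN, hs0, ← hHc (s j) (hsmem j (by omega))]
    have hNφ : φ N = φ 0 := by
      show G (z N j) (H (s j, s N)) - G (z N j) (H (s (j+1), s N))
        = G (z 0 j) (H (s j, s 0)) - G (z 0 j) (H (s (j+1), s 0))
      rw [hze, hsN, hs0, ← hHc (s j) (hsmem j (by omega)), ← hHc (s (j+1)) (hsmem (j+1) (by omega))]
    have h0 : Bot j - Top j = 0 := by rw [hsum, hNφ, sub_self]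
    exact sub_eq_zero.1 h0
  -- Claim 4 : Top j = Bot (j+1) for j < N
  have claim4 : ∀ j < N, Top j = Bot (j+1) := by
    intro j hj
    rw [hTopdef, hBotdef]
    apply Finset.sum_congr rfl
    intro i hi
    rw [Finset.mem_range] at hi
    refine primitive_diff_const (f := f) ((sqV_isOpen _ _).inter (sqV_isOpen _ _))
      ((sqV_convex _ _).inter (sqV_convex _ _))
      (fun w hw => hG _ (hzK i (by omega) j (by omega)) w hw.1)
      (fun w hw => hG _ (hzK i (by omega) (j+1) (by omega)) w hw.2) ?_ ?_
    · exact ⟨hmemSq (j+1) i j i (by omega) (by omega) (by omega) (by omega)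
          (habs_step j) (habs_self _),
        hmemSq (j+1) i (j+1) i (by omega) (by omega) (by omega) (by omega)
          (habs_self _) (habs_self _)⟩
    · exact ⟨hmemSq (j+1) (i+1) j i (by omega) (by omega) (by omega) (by omega)
          (habs_step j) (habs_step i),
        hmemSq (j+1) (i+1) (j+1) i (by omega) (by omega) (by omega) (by omega)
          (habs_self _) (habs_step i)⟩
  have hchain : ∀ j < N, Bot j = Bot 0 := by
    intro j
    induction j with
    | zero => intro _; rfl
    | succ k ih =>
      intro hk
      rw [← claim4 k (by omega), ← claim3 k (by omega), ih (by omega)]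
  rw [claim1, claim2, ← claim3 N' (by omega), hchain N' (by omega)]
end
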